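/- Let V > 0, r = √(V/π), and let μ be a measure on [0, π/2] × [0, ∞) (coordinates (α, ℓ)) such that the pushforward of μ under the projection (α, ℓ) ↦ α equals twice the Lebesgue measure on [0, π/2], and such that ∫ ℓ²/2 dμ(α, ℓ) ≤ V. Then equality ∫ ℓ·cos(α) dμ(α, ℓ) = √(πV) holds if and only if ∫ ℓ²/2 dμ = V and μ is concentrated on the set {(α, ℓ) : ℓ = 2r·cos(α)}. -/

import Mathlib

open Real MeasureTheory ENNReal

private lemma littlePrince_aux_id (r ℓ c : ℝ) (hr : 0 < r) (hℓ : 0 ≤ ℓ) (hc : 0 ≤ c) :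
    ENNReal.ofReal (ℓ * c) + ENNReal.ofReal ((ℓ - 2 * r * c) ^ 2 / (4 * r)) =
      ENNReal.ofReal (1 / (2 * r)) * ENNReal.ofReal (ℓ ^ 2 / 2) +
        ENNReal.ofReal (r * c ^ 2) := by
  rw [← ENNReal.ofReal_mul (by positivity),
    ← ENNReal.ofReal_add (by positivity) (by positivity),
    ← ENNReal.ofReal_add (by positivity) (by positivity)]
  congr 1
  field_simp
  ring

/-- Equality case of the analytic core of the Little Prince theorem: under the same
hypotheses, equality `∫ ℓ·cos α dμ = √(πV)` holds iff `∫ ℓ²/2 dμ = V` and `μ` is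
concentrated on the set `{(α, ℓ) : ℓ = 2r·cos α}` where `r = √(V/π)`. -/
theorem littlePrince_equality (V : ℝ) (hV : 0 < V) (r : ℝ) (hr : r = Real.sqrt (V / π))
    (μ : Measure (ℝ × ℝ))
    (hsupp : μ ((Set.Icc 0 (π / 2) ×ˢ Set.Ici (0 : ℝ))ᶜ) = 0)
    (hmarg : μ.map Prod.fst = (2 : ℝ≥0∞) • volume.restrict (Set.Icc 0 (π / 2)))
    (harea : ∫⁻ x, ENNReal.ofReal (x.2 ^ 2 / 2) ∂μ ≤ ENNReal.ofReal V) :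
    ∫⁻ x, ENNReal.ofReal (x.2 * cos x.1) ∂μ = ENNReal.ofReal (Real.sqrt (π * V)) ↔
      (∫⁻ x, ENNReal.ofReal (x.2 ^ 2 / 2) ∂μ = ENNReal.ofReal V ∧
        μ {x : ℝ × ℝ | x.2 ≠ 2 * r * cos x.1} = 0) := by
  have hπ : (0:ℝ) < π := Real.pi_pos
  have hrpos : 0 < r := by
    rw [hr]; exact Real.sqrt_pos.2 (div_pos hV hπ)
  have hrsq : r ^ 2 = V / π := by
    rw [hr]; exact Real.sq_sqrt (div_pos hV hπ).le
  have hVr : V = π * r ^ 2 := by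
    rw [hrsq]; field_simp
  have hTr : Real.sqrt (π * V) = π * r := by
    have h : π * V = (π * r) ^ 2 := by rw [hVr]; ring
    rw [h, Real.sqrt_sq (by positivity)]
  have hsum : V / (2 * r) + r * π / 2 = π * r := by
    rw [hVr]; field_simp; ring
  -- measurability
  have mf : Measurable fun x : ℝ × ℝ => ENNReal.ofReal (x.2 * Real.cos x.1) :=
    (measurable_snd.mul (Real.continuous_cos.measurable.comp measurable_fst)).ennreal_ofReal
  have mg : Measurable fun x : ℝ × ℝ =>
      ENNReal.ofReal ((x.2 - 2 * r * Real.cos x.1) ^ 2 / (4 * r)) := by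
    apply Measurable.ennreal_ofReal
    apply Measurable.div_const
    apply Measurable.pow_const
    exact measurable_snd.sub
      ((Real.continuous_cos.measurable.comp measurable_fst).const_mul (2 * r))
  have mh1 : Measurable fun x : ℝ × ℝ => ENNReal.ofReal (x.2 ^ 2 / 2) :=
    ((measurable_snd.pow_const 2).div_const 2).ennreal_ofReal
  have mh2 : Measurable fun x : ℝ × ℝ => ENNReal.ofReal (Real.cos x.1 ^ 2) :=
    (((Real.continuous_cos.measurable.comp measurable_fst)).pow_const 2).ennreal_ofReal
  -- notation
  set L := ∫⁻ x, ENNReal.ofReal (x.2 * cos x.1) ∂μ with hL_def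
  set A := ∫⁻ x, ENNReal.ofReal (x.2 ^ 2 / 2) ∂μ with hA_def
  set B := ∫⁻ x, ENNReal.ofReal ((x.2 - 2 * r * cos x.1) ^ 2 / (4 * r)) ∂μ with hB_def
  -- marginal computation : ∫⁻ cos² dμ = π/2
  have hcos2 : ∫⁻ x, ENNReal.ofReal (cos x.1 ^ 2) ∂μ = ENNReal.ofReal (π / 2) := by
    have h1 : ∫⁻ x, ENNReal.ofReal (cos x.1 ^ 2) ∂μ
        = ∫⁻ a, ENNReal.ofReal (cos a ^ 2) ∂(μ.map Prod.fst) := by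
      rw [lintegral_map ((Real.continuous_cos.measurable.pow_const 2).ennreal_ofReal)
        measurable_fst]
    rw [h1, hmarg, lintegral_smul_measure]
    have hint : IntegrableOn (fun a => Real.cos a ^ 2) (Set.Icc 0 (π / 2)) :=
      ((Real.continuous_cos.pow 2).continuousOn).integrableOn_compact isCompact_Icc
    have h2 : ∫⁻ a in Set.Icc 0 (π / 2), ENNReal.ofReal (cos a ^ 2) = ENNReal.ofReal (π / 4) := by
      rw [← ofReal_integral_eq_lintegral_ofReal hint (ae_of_all _ fun a => by positivity)]
      congr 1
      rw [MeasureTheory.integral_Icc_eq_integral_Ioc,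
        ← intervalIntegral.integral_of_le (by positivity)]
      rw [integral_cos_sq]; simp; ring
    rw [h2, show (2 : ℝ≥0∞) = ENNReal.ofReal 2 by simp, smul_eq_mul,
      ← ENNReal.ofReal_mul (by norm_num)]
    congr 1
    ring
  -- a.e. support
  have hae : ∀ᵐ x ∂μ, x ∈ Set.Icc 0 (π / 2) ×ˢ Set.Ici (0 : ℝ) := mem_ae_iff.2 hsupp
  -- master identity
  have master : L + B = ENNReal.ofReal (1 / (2 * r)) * A + ENNReal.ofReal (r * π / 2) := by
    have h1 : ∀ᵐ x ∂μ, ENNReal.ofReal (x.2 * cos x.1)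
          + ENNReal.ofReal ((x.2 - 2 * r * cos x.1) ^ 2 / (4 * r))
        = ENNReal.ofReal (1 / (2 * r)) * ENNReal.ofReal (x.2 ^ 2 / 2)
          + ENNReal.ofReal r * ENNReal.ofReal (cos x.1 ^ 2) := by
      filter_upwards [hae] with x hx
      have hc : 0 ≤ Real.cos x.1 :=
        Real.cos_nonneg_of_mem_Icc ⟨by linarith [hx.1.1, hπ], hx.1.2⟩
      rw [← ENNReal.ofReal_mul hrpos.le]
      exact littlePrince_aux_id r x.2 (cos x.1) hrpos hx.2 hc
    calc L + B = ∫⁻ x, (ENNReal.ofReal (x.2 * cos x.1)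
          + ENNReal.ofReal ((x.2 - 2 * r * cos x.1) ^ 2 / (4 * r))) ∂μ :=
        (lintegral_add_left mf _).symm
      _ = ∫⁻ x, (ENNReal.ofReal (1 / (2 * r)) * ENNReal.ofReal (x.2 ^ 2 / 2)
          + ENNReal.ofReal r * ENNReal.ofReal (cos x.1 ^ 2)) ∂μ := lintegral_congr_ae h1
      _ = ENNReal.ofReal (1 / (2 * r)) * A + ENNReal.ofReal r
            * ∫⁻ x, ENNReal.ofReal (cos x.1 ^ 2) ∂μ := by
        rw [lintegral_add_left (mh1.const_mul _), lintegral_const_mul _ mh1,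
          lintegral_const_mul _ mh2]
      _ = ENNReal.ofReal (1 / (2 * r)) * A + ENNReal.ofReal (r * π / 2) := by
        rw [hcos2, ← ENNReal.ofReal_mul hrpos.le]; ring_nf
  have hfin2 : ENNReal.ofReal (1 / (2 * r)) * ENNReal.ofReal V + ENNReal.ofReal (r * π / 2)
      = ENNReal.ofReal (Real.sqrt (π * V)) := by
    rw [← ENNReal.ofReal_mul (by positivity), ← ENNReal.ofReal_add (by positivity) (by positivity),
      hTr]
    congr 1
    rw [← hsum]; ring_nf
  have hRle : ENNReal.ofReal (1 / (2 * r)) * A + ENNReal.ofReal (r * π / 2)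
      ≤ ENNReal.ofReal (Real.sqrt (π * V)) := by
    rw [← hfin2]
    exact add_le_add_left (mul_le_mul_right harea _) _
  constructor
  · rintro hL
    -- B = 0
    have hB0 : B = 0 := by
      have h1 : ENNReal.ofReal (Real.sqrt (π * V)) + B
          ≤ ENNReal.ofReal (Real.sqrt (π * V)) := by
        nth_rewrite 1 [← hL]; exact master.le.trans hRle
      have h2 : ENNReal.ofReal (Real.sqrt (π * V)) + B
          ≤ ENNReal.ofReal (Real.sqrt (π * V)) + 0 := by simpa using h1
      exact le_zero_iff.1 ((ENNReal.add_le_add_iff_left ENNReal.ofReal_ne_top).1 h2)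
    have hmaster' : ENNReal.ofReal (1 / (2 * r)) * A + ENNReal.ofReal (r * π / 2)
        = ENNReal.ofReal (Real.sqrt (π * V)) := by
      rw [← master, hL, hB0, add_zero]
    -- A = ofReal V
    have hA : A = ENNReal.ofReal V := by
      by_contra hne
      have hlt : A < ENNReal.ofReal V := lt_of_le_of_ne harea hne
      have hc0 : ENNReal.ofReal (1 / (2 * r)) ≠ 0 := by
        simp [ENNReal.ofReal_eq_zero]; positivity
      have h2 : ENNReal.ofReal (1 / (2 * r)) * A
          < ENNReal.ofReal (1 / (2 * r)) * ENNReal.ofReal V :=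
        (ENNReal.mul_lt_mul_iff_right hc0 ENNReal.ofReal_ne_top).2 hlt
      have h3 : ENNReal.ofReal (1 / (2 * r)) * A + ENNReal.ofReal (r * π / 2)
          < ENNReal.ofReal (1 / (2 * r)) * ENNReal.ofReal V + ENNReal.ofReal (r * π / 2) :=
        ENNReal.add_lt_add_right ENNReal.ofReal_ne_top h2
      rw [hmaster', hfin2] at h3
      exact lt_irrefl _ h3
    refine ⟨hA, ?_⟩
    -- concentration
    have hg0 : ∀ᵐ x ∂μ,
        ENNReal.ofReal ((x.2 - 2 * r * cos x.1) ^ 2 / (4 * r)) = 0 :=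
      (lintegral_eq_zero_iff mg).1 hB0
    have hsub : {x : ℝ × ℝ | x.2 ≠ 2 * r * cos x.1}
        ⊆ {x : ℝ × ℝ | ¬ ENNReal.ofReal ((x.2 - 2 * r * cos x.1) ^ 2 / (4 * r)) = 0} := by
      intro x hx
      simp only [Set.mem_setOf_eq, ENNReal.ofReal_eq_zero, not_le]
      have hd : x.2 - 2 * r * cos x.1 ≠ 0 := sub_ne_zero.2 hx
      positivity
    exact measure_mono_null hsub (ae_iff.1 hg0)
  · rintro ⟨hA, hconc⟩
    have hB0 : B = 0 := by
      have h1 : ∀ᵐ x ∂μ,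
          ENNReal.ofReal ((x.2 - 2 * r * cos x.1) ^ 2 / (4 * r)) = 0 := by
        have : ∀ᵐ x ∂μ, x.2 = 2 * r * cos x.1 := by
          rw [ae_iff]; exact hconc
        filter_upwards [this] with x hx
        rw [hx]; simp
      rw [hB_def, lintegral_congr_ae h1, lintegral_zero]
    rw [hL_def] at master ⊢
    rw [hB0, add_zero, hA, hfin2] at master
    exact master
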